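/- Let T be a (d₁,d₂)-biregular tree with d₁,d₂ ≥ 3 and Γ ≤ Aut(T) a tree lattice. Then the associated Markov chain (Mₙ) on EQ is irreducible: for all e, f ∈ EQ there exists n ≥ 1 with Pⁿ(e,f) > 0. -/

import Mathlib

open Filter Topology MeasureTheory

attribute [local instance] Classical.propDecidable

namespace TreeDyn


variable {V : Type*}

/-- The type of directed edges of a simple graph. -/
def DEdge (T : SimpleGraph V) : Type _ := {p : V × V // T.Adj p.1 p.2}

/-- `T` is a `(d₁,d₂)`-biregular tree: a tree whose vertex set admits a bipartition such
that every vertex of one class has degree `d₁` and every vertex of the other class has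
degree `d₂`. -/
def IsBiregularTree (T : SimpleGraph V) (d₁ d₂ : ℕ) : Prop :=
  T.Connected ∧ T.IsAcyclic ∧
    ∃ c : V → Bool,
      (∀ u v, T.Adj u v → c u ≠ c v) ∧
      (∀ v, c v = true → Nat.card (T.neighborSet v) = d₁) ∧
      (∀ v, c v = false → Nat.card (T.neighborSet v) = d₂)

/-- A permutation of the vertices is an automorphism of `T` acting without edge
inversion if it preserves adjacency and moves every vertex an even distance. -/
def IsTreeAut (T : SimpleGraph V) (σ : Equiv.Perm V) : Prop :=
  (∀ u v, T.Adj (σ u) (σ v) ↔ T.Adj u v) ∧ ∀ v, Even (T.dist v (σ v))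

variable (T : SimpleGraph V) (Λ : Subgroup (Equiv.Perm V))

/-- Two vertices are related if they lie in the same `Λ`-orbit. -/
def vrel (u v : V) : Prop := ∃ γ ∈ Λ, γ u = v

/-- The vertex set of the quotient graph `Q = Λ∖T`. -/
def VQ := Quot (vrel Λ)

/-- Projection of vertices to the quotient graph. -/
def πV : V → VQ Λ := Quot.mk _

/-- Two directed edges are related if they lie in the same `Λ`-orbit. -/
def erel (e f : DEdge T) : Prop :=
  ∃ γ ∈ Λ, γ e.1.1 = f.1.1 ∧ γ e.1.2 = f.1.2

/-- The directed edge set of the quotient graph `Q = Λ∖T`. -/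
def EQ := Quot (erel T Λ)

/-- Projection of directed edges to the quotient graph. -/
def πE : DEdge T → EQ T Λ := Quot.mk _

/-- The initial vertex `∂₀ e` of a quotient edge. -/
noncomputable def tailQ (e : EQ T Λ) : VQ Λ := πV Λ (Quot.out e).1.1

/-- The terminal vertex `∂₁ e` of a quotient edge. -/
noncomputable def headQ (e : EQ T Λ) : VQ Λ := πV Λ (Quot.out e).1.2

/-- The reversal `ē` of a quotient edge. -/
noncomputable def barQ (e : EQ T Λ) : EQ T Λ :=
  πE T Λ ⟨((Quot.out e).1.2, (Quot.out e).1.1), (Quot.out e).2.symm⟩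

/-- The order of the stabilizer of a vertex in `Λ`. -/
noncomputable def stabV (v : V) : ℕ :=
  Nat.card {γ : Λ // (γ : Equiv.Perm V) v = v}

/-- The order of the pointwise stabilizer of a directed edge in `Λ`. -/
noncomputable def stabE (e : DEdge T) : ℕ :=
  Nat.card {γ : Λ // (γ : Equiv.Perm V) e.1.1 = e.1.1 ∧ (γ : Equiv.Perm V) e.1.2 = e.1.2}

/-- The index map of the edge-indexed graph: `ind e = [Λ_{∂₀ẽ} : Λ_ẽ]` for any lift `ẽ`. -/
noncomputable def indQ (e : EQ T Λ) : ℕ :=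
  stabV Λ (Quot.out e).1.1 / stabE T Λ (Quot.out e)

/-- The degree of a vertex of the quotient graph: the degree in `T` of any of its lifts. -/
noncomputable def degQ (v : VQ Λ) : ℕ := Nat.card (T.neighborSet (Quot.out v))

/-- `Δ(e) = ind(ē)/ind(e)`. -/
noncomputable def deltaQ (e : EQ T Λ) : ℝ :=
  (indQ T Λ (barQ T Λ e) : ℝ) / (indQ T Λ e : ℝ)

/-- `Λ` is a tree lattice: a discrete subgroup (finite vertex stabilizers) of `Aut T`
with finite covolume, i.e. `Σ_{v ∈ VQ} N_o(v)⁻¹ < ∞` where `N_o` is the multiplicative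
function along paths determined by `Δ`. -/
def IsTreeLattice : Prop :=
  (∀ γ ∈ Λ, IsTreeAut T γ) ∧
  (∀ v : V, Finite {γ : Λ // (γ : Equiv.Perm V) v = v}) ∧
  ∃ (o : VQ Λ) (N : VQ Λ → ℝ),
    N o = 1 ∧ (∀ v, 0 < N v) ∧
    (∀ e : EQ T Λ, N (headQ T Λ e) = deltaQ T Λ e * N (tailQ T Λ e)) ∧
    Summable (fun v : VQ Λ => (N v)⁻¹)

/-- The transition kernel of the Markov chain associated to `Λ` on the directed edges
of the quotient graph. -/
noncomputable def kerP (e f : EQ T Λ) : ℝ :=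
  if headQ T Λ e = tailQ T Λ f then
    (if f = barQ T Λ e then ((indQ T Λ f : ℝ) - 1) else (indQ T Λ f : ℝ)) /
      ((degQ T Λ (headQ T Λ e) : ℝ) - 1)
  else 0

/-- The `n`-step transition kernel. -/
noncomputable def kerPn : ℕ → EQ T Λ → EQ T Λ → ℝ
  | 0, e, f => if e = f then 1 else 0
  | n + 1, e, f => ∑' g : EQ T Λ, kerPn n e g * kerP T Λ g f

/-- Adjacency in the quotient graph. -/
def AdjQ (u v : VQ Λ) : Prop :=
  ∃ e : EQ T Λ, tailQ T Λ e = u ∧ headQ T Λ e = v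

/-- Graph distance on the quotient graph. -/
noncomputable def distQ (u v : VQ Λ) : ℕ :=
  sInf {n : ℕ | ∃ f : ℕ → VQ Λ, f 0 = u ∧ f n = v ∧ ∀ i < n, AdjQ T Λ (f i) (f (i + 1))}

/-- Distance from a finite set of vertices of the quotient graph. -/
noncomputable def distToF (F : Finset (VQ Λ)) (v : VQ Λ) : ℕ :=
  sInf {n : ℕ | ∃ u ∈ F, distQ T Λ u v = n}

/-- `F` is a finite part for `Λ`: the complement of `F` in the quotient graph is a
disjoint union of finitely many open Nagao rays. -/
def IsFinitePart (F : Finset (VQ Λ)) : Prop :=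
  ∃ (k : ℕ) (ray : Fin k → ℕ → VQ Λ),
    (∀ v : VQ Λ, v ∉ F ↔ ∃ i n, ray i n = v) ∧
    (∀ i n j m, ray i n = ray j m → i = j ∧ n = m) ∧
    (∀ i n, ∃ e : EQ T Λ, tailQ T Λ e = ray i n ∧ headQ T Λ e = ray i (n + 1)) ∧
    (∀ i n, ∀ e f : EQ T Λ, tailQ T Λ e = ray i n → headQ T Λ e = ray i (n + 1) →
      tailQ T Λ f = ray i n → headQ T Λ f = ray i (n + 1) → e = f) ∧
    (∀ i n, ∀ e : EQ T Λ, tailQ T Λ e = ray i n → headQ T Λ e ∉ F →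
      headQ T Λ e = ray i (n + 1) ∨ ∃ m, n = m + 1 ∧ headQ T Λ e = ray i m) ∧
    (∀ i n, ∀ e : EQ T Λ, tailQ T Λ e = ray i n → headQ T Λ e = ray i (n + 1) →
      indQ T Λ e = 1) ∧
    (∀ i n, ∀ e : EQ T Λ, tailQ T Λ e = ray i (n + 1) → headQ T Λ e = ray i n →
      indQ T Λ e = degQ T Λ (ray i n) - 1)

/-- A tree lattice is geometrically finite if its quotient graph contains a nonempty
finite subgraph whose complement is a disjoint union of finitely many open Nagao rays. -/
def IsGeomFinite : Prop := ∃ F : Finset (VQ Λ), F.Nonempty ∧ IsFinitePart T Λ F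

/-- The mass that the projection to `VQ` of the uniform measure on the sphere
`S(vb,n)` gives to the vertex `q` of the quotient graph. -/
noncomputable def sphPush (vb : V) (n : ℕ) (q : VQ Λ) : ℝ :=
  (Nat.card {w : V // T.dist vb w = n ∧ πV Λ w = q} : ℝ) /
    (Nat.card {w : V // T.dist vb w = n} : ℝ)

/-- `ℙ_e(τ = i)` : the probability that the Markov chain started at `e` hits the set of
edges with terminal vertex in `F` for the first time at time `i`. -/
noncomputable def hitP (F : Finset (VQ Λ)) : ℕ → EQ T Λ → ℝ
  | 0, e => if headQ T Λ e ∈ F then 1 else 0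
  | i + 1, e => if headQ T Λ e ∈ F then 0 else ∑' f : EQ T Λ, kerP T Λ e f * hitP F i f

/-- `ℙ_e(τ' = i)` where `τ' = min {n | n ≥ τ, 2 ∣ n}`. -/
noncomputable def hitP' (F : Finset (VQ Λ)) (i : ℕ) (e : EQ T Λ) : ℝ :=
  if 2 ∣ i then hitP T Λ F i e + (if 1 ≤ i then hitP T Λ F (i - 1) e else 0) else 0

/-- `(Ω₀, Ω₁)` is the pair of cyclic classes of the (period two) kernel `P`. -/
def IsCyclicPair (Ω₀ Ω₁ : Set (EQ T Λ)) : Prop :=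
  (∀ e, e ∈ Ω₀ ∨ e ∈ Ω₁) ∧ (∀ e, ¬(e ∈ Ω₀ ∧ e ∈ Ω₁)) ∧
  (∀ e ∈ Ω₀, ∀ f, kerP T Λ e f ≠ 0 → f ∈ Ω₁) ∧
  (∀ e ∈ Ω₁, ∀ f, kerP T Λ e f ≠ 0 → f ∈ Ω₀)

/-- `Ω` is a cyclic class of the kernel `P`. -/
def IsCyclicClass (Ω : Set (EQ T Λ)) : Prop :=
  ∃ Ω', IsCyclicPair T Λ Ω Ω' ∨ IsCyclicPair T Λ Ω' Ω


/-! ### Auxiliary development for the irreducibility theorem -/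

section Aux

theorem Equiv.Perm.inv_apply_self {α : Type*} (f : Equiv.Perm α) (x : α) : f⁻¹ (f x) = x :=
  Equiv.Perm.inv_eq_iff_eq.mpr rfl

/-! #### Basic facts about the equivalence relations -/

lemma vrel_equivalence : Equivalence (vrel Λ) := by
  constructor
  · exact fun u => ⟨1, Λ.one_mem, rfl⟩
  · rintro u v ⟨γ, hγ, rfl⟩
    exact ⟨γ⁻¹, Λ.inv_mem hγ, Equiv.Perm.inv_apply_self γ u⟩
  · rintro u v w ⟨γ, hγ, rfl⟩ ⟨δ, hδ, rfl⟩
    exact ⟨δ * γ, Λ.mul_mem hδ hγ, rfl⟩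

lemma erel_equivalence : Equivalence (erel T Λ) := by
  constructor
  · exact fun x => ⟨1, Λ.one_mem, rfl, rfl⟩
  · rintro x y ⟨γ, hγ, h1, h2⟩
    exact ⟨γ⁻¹, Λ.inv_mem hγ, by rw [← h1, Equiv.Perm.inv_apply_self], by rw [← h2, Equiv.Perm.inv_apply_self]⟩
  · rintro x y z ⟨γ, hγ, h1, h2⟩ ⟨δ, hδ, h3, h4⟩
    exact ⟨δ * γ, Λ.mul_mem hδ hγ, by simp [Equiv.Perm.mul_apply, h1, h3],
      by simp [Equiv.Perm.mul_apply, h2, h4]⟩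

lemma πV_eq_iff {u v : V} : πV Λ u = πV Λ v ↔ vrel Λ u v := by
  unfold πV
  exact Quot.eq.trans (vrel_equivalence Λ).eqvGen_iff

lemma πE_eq_iff {x y : DEdge T} : πE T Λ x = πE T Λ y ↔ erel T Λ x y := by
  unfold πE
  exact Quot.eq.trans (erel_equivalence T Λ).eqvGen_iff

lemma πE_out (g : EQ T Λ) : πE T Λ (Quot.out g) = g := Quot.out_eq g

lemma πV_out (v : VQ Λ) : πV Λ (Quot.out v) = v := Quot.out_eq v

lemma erel_out (x : DEdge T) : erel T Λ (Quot.out (πE T Λ x)) x :=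
  (πE_eq_iff T Λ).mp (πE_out T Λ (πE T Λ x))

lemma tailQ_mk (x : DEdge T) : tailQ T Λ (πE T Λ x) = πV Λ x.1.1 := by
  obtain ⟨γ, hγ, h1, _⟩ := erel_out T Λ x
  exact (πV_eq_iff Λ).mpr ⟨γ, hγ, h1⟩

lemma headQ_mk (x : DEdge T) : headQ T Λ (πE T Λ x) = πV Λ x.1.2 := by
  obtain ⟨γ, hγ, _, h2⟩ := erel_out T Λ x
  exact (πV_eq_iff Λ).mpr ⟨γ, hγ, h2⟩

lemma barQ_mk (x : DEdge T) :
    barQ T Λ (πE T Λ x) = πE T Λ ⟨(x.1.2, x.1.1), x.2.symm⟩ := by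
  obtain ⟨γ, hγ, h1, h2⟩ := erel_out T Λ x
  exact (πE_eq_iff T Λ).mpr ⟨γ, hγ, h2, h1⟩

lemma barQ_barQ (g : EQ T Λ) : barQ T Λ (barQ T Λ g) = g := by
  conv_lhs => rw [← πE_out T Λ g]
  rw [barQ_mk, barQ_mk T Λ ⟨_, _⟩]
  exact πE_out T Λ g

lemma barQ_inj {g g' : EQ T Λ} (h : barQ T Λ g = barQ T Λ g') : g = g' := by
  rw [← barQ_barQ T Λ g, h, barQ_barQ]

lemma tailQ_barQ (g : EQ T Λ) : tailQ T Λ (barQ T Λ g) = headQ T Λ g := by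
  conv_lhs => rw [← πE_out T Λ g]
  rw [barQ_mk, tailQ_mk T Λ ⟨_, _⟩]
  rfl

lemma headQ_barQ (g : EQ T Λ) : headQ T Λ (barQ T Λ g) = tailQ T Λ g := by
  conv_lhs => rw [← πE_out T Λ g]
  rw [barQ_mk, headQ_mk T Λ ⟨_, _⟩]
  rfl

/-! #### Stabilizer cardinalities -/

private lemma conj_fix (g δ : Λ) {z : V} (hz : (δ : Equiv.Perm V) z = z) :
    ((g * δ * g⁻¹ : Λ) : Equiv.Perm V) ((g : Equiv.Perm V) z) = (g : Equiv.Perm V) z := by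
  have h : ((g * δ * g⁻¹ : Λ) : Equiv.Perm V) ((g : Equiv.Perm V) z)
      = (g : Equiv.Perm V) ((δ : Equiv.Perm V) (((g : Equiv.Perm V))⁻¹
        ((g : Equiv.Perm V) z))) := rfl
  rw [h, Equiv.Perm.inv_apply_self, hz]

private lemma conj_fix' (g δ : Λ) {z : V}
    (hz : (δ : Equiv.Perm V) ((g : Equiv.Perm V) z) = (g : Equiv.Perm V) z) :
    ((g⁻¹ * δ * g : Λ) : Equiv.Perm V) z = z := by
  have h : ((g⁻¹ * δ * g : Λ) : Equiv.Perm V) z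
      = ((g : Equiv.Perm V))⁻¹ ((δ : Equiv.Perm V) ((g : Equiv.Perm V) z)) := rfl
  rw [h, hz, Equiv.Perm.inv_apply_self]

/-- Conjugation equivalence on pairwise stabilizers. -/
def conjPairEquiv (g : Λ) (u v : V) :
    {γ : Λ // (γ : Equiv.Perm V) u = u ∧ (γ : Equiv.Perm V) v = v} ≃
    {γ : Λ // (γ : Equiv.Perm V) ((g : Equiv.Perm V) u) = (g : Equiv.Perm V) u ∧
      (γ : Equiv.Perm V) ((g : Equiv.Perm V) v) = (g : Equiv.Perm V) v} where
  toFun δ := ⟨g * δ.1 * g⁻¹, conj_fix Λ g δ.1 δ.2.1, conj_fix Λ g δ.1 δ.2.2⟩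
  invFun δ := ⟨g⁻¹ * δ.1 * g, conj_fix' Λ g δ.1 δ.2.1, conj_fix' Λ g δ.1 δ.2.2⟩
  left_inv δ := by
    apply Subtype.ext
    show g⁻¹ * (g * δ.1 * g⁻¹) * g = δ.1
    group
  right_inv δ := by
    apply Subtype.ext
    show g * (g⁻¹ * δ.1 * g) * g⁻¹ = δ.1
    group

/-- Conjugation equivalence on vertex stabilizers. -/
def conjVertEquiv (g : Λ) (u : V) :
    {γ : Λ // (γ : Equiv.Perm V) u = u} ≃
    {γ : Λ // (γ : Equiv.Perm V) ((g : Equiv.Perm V) u) = (g : Equiv.Perm V) u} where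
  toFun δ := ⟨g * δ.1 * g⁻¹, conj_fix Λ g δ.1 δ.2⟩
  invFun δ := ⟨g⁻¹ * δ.1 * g, conj_fix' Λ g δ.1 δ.2⟩
  left_inv δ := by
    apply Subtype.ext
    show g⁻¹ * (g * δ.1 * g⁻¹) * g = δ.1
    group
  right_inv δ := by
    apply Subtype.ext
    show g * (g⁻¹ * δ.1 * g) * g⁻¹ = δ.1
    group

lemma stabV_vrel {u v : V} (h : vrel Λ u v) : stabV Λ u = stabV Λ v := by
  obtain ⟨γ, hγ, rfl⟩ := h
  exact Nat.card_congr (conjVertEquiv Λ (⟨γ, hγ⟩ : Λ) u)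

lemma stabE_conj {x y : DEdge T} (γ : Equiv.Perm V) (hγ : γ ∈ Λ)
    (h1 : γ x.1.1 = y.1.1) (h2 : γ x.1.2 = y.1.2) : stabE T Λ x = stabE T Λ y := by
  have := Nat.card_congr (conjPairEquiv Λ (⟨γ, hγ⟩ : Λ) x.1.1 x.1.2)
  unfold stabE
  rw [this]
  congr 1 <;> rw [h1, h2]

lemma indQ_repr (x : DEdge T) :
    indQ T Λ (πE T Λ x) = stabV Λ x.1.1 / stabE T Λ x := by
  obtain ⟨γ, hγ, h1, h2⟩ := erel_out T Λ x
  unfold indQ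
  rw [stabV_vrel Λ ⟨γ, hγ, h1⟩, stabE_conj T Λ γ hγ h1 h2]

/-- The fiber of directed edges out of `w` over a quotient edge. -/
def Fib (w : V) (g : EQ T Λ) : Type _ :=
  {c : V // ∃ h : T.Adj w c, πE T Λ ⟨(w, c), h⟩ = g}

/-- **Orbit–stabilizer**: the index of a quotient edge counts lifts at a fixed
tail vertex. -/
lemma indQ_card (haut : ∀ γ ∈ Λ, IsTreeAut T γ)
    (hfin : ∀ v : V, Finite {γ : Λ // (γ : Equiv.Perm V) v = v}) (x : DEdge T) :
    indQ T Λ (πE T Λ x) = Nat.card (Fib T Λ x.1.1 (πE T Λ x)) := by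
  classical
  set w := x.1.1 with hw
  set c₀ := x.1.2 with hc₀
  set G := MulAction.stabilizer Λ w with hG
  have eqV : {γ : Λ // (γ : Equiv.Perm V) w = w} ≃ {γ : Λ // γ ∈ G} :=
    Equiv.subtypeEquivRight (fun γ => Iff.rfl)
  haveI : Finite {γ : Λ // (γ : Equiv.Perm V) w = w} := hfin w
  haveI hGfin : Finite G := Finite.of_equiv _ eqV
  haveI : Finite (MulAction.stabilizer G c₀) :=
    Finite.of_injective (fun δ => (δ.1 : G)) (fun a b hab => Subtype.ext hab)
  have hGcard : Nat.card G = stabV Λ w := (Nat.card_congr eqV).symm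
  have eqE : MulAction.stabilizer G c₀ ≃
      {γ : Λ // (γ : Equiv.Perm V) w = w ∧ (γ : Equiv.Perm V) c₀ = c₀} :=
    { toFun := fun δ => ⟨δ.1.1, δ.1.2, δ.2⟩
      invFun := fun γ => ⟨⟨γ.1, γ.2.1⟩, γ.2.2⟩
      left_inv := fun δ => rfl
      right_inv := fun γ => rfl }
  have hstabE : Nat.card (MulAction.stabilizer G c₀) = stabE T Λ x :=
    Nat.card_congr eqE
  haveI : Nonempty (MulAction.stabilizer G c₀) := ⟨1⟩
  have hpos : 0 < Nat.card (MulAction.stabilizer G c₀) := Nat.card_pos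
  have h1 : Nat.card G =
      Nat.card (G ⧸ MulAction.stabilizer G c₀) * Nat.card (MulAction.stabilizer G c₀) :=
    Subgroup.card_eq_card_quotient_mul_card_subgroup _
  have h2 : Nat.card (MulAction.orbit G c₀) = Nat.card (G ⧸ MulAction.stabilizer G c₀) :=
    Nat.card_congr (MulAction.orbitEquivQuotientStabilizer G c₀)
  have horb : Nat.card (MulAction.orbit G c₀) = stabV Λ w / stabE T Λ x := by
    rw [h2, ← hstabE, ← hGcard, h1, Nat.mul_div_cancel _ hpos]
  have hfib : ∀ c : V, c ∈ MulAction.orbit G c₀ ↔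
      ∃ h : T.Adj w c, πE T Λ ⟨(w, c), h⟩ = πE T Λ x := by
    intro c
    constructor
    · rintro ⟨δ, rfl⟩
      have hδw : ((δ : Λ) : Equiv.Perm V) w = w := δ.2
      have hadj : T.Adj w (((δ : Λ) : Equiv.Perm V) c₀) := by
        have := (haut ((δ : Λ) : Equiv.Perm V) (δ : Λ).2).1 w c₀
        rw [hδw] at this
        exact this.mpr x.2
      refine ⟨hadj, (πE_eq_iff T Λ).mpr ⟨(((δ : Λ) : Equiv.Perm V))⁻¹,
        Λ.inv_mem (δ : Λ).2, ?_, ?_⟩⟩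
      · show (((δ : Λ) : Equiv.Perm V))⁻¹ w = x.1.1
        rw [← hδw, Equiv.Perm.inv_apply_self]
      · exact Equiv.Perm.inv_apply_self _ _
    · rintro ⟨h, heq⟩
      obtain ⟨γ, hγ, hg1, hg2⟩ := (πE_eq_iff T Λ).mp heq
      have hg1' : γ w = w := hg1
      have hg2' : γ c = c₀ := hg2
      have hmem : (⟨γ, hγ⟩ : Λ)⁻¹ ∈ G := by
        show γ⁻¹ w = w
        conv_lhs => rw [← hg1']
        rw [Equiv.Perm.inv_apply_self]
      refine ⟨⟨(⟨γ, hγ⟩ : Λ)⁻¹, hmem⟩, ?_⟩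
      show γ⁻¹ c₀ = c
      rw [← hg2', Equiv.Perm.inv_apply_self]
  have : Nat.card (MulAction.orbit G c₀) = Nat.card (Fib T Λ w (πE T Λ x)) :=
    Nat.card_congr (Equiv.subtypeEquivRight hfib)
  rw [indQ_repr, ← horb, this]

/-! #### Degrees and finiteness of neighbor sets -/

lemma three_le_card_nbhd {d₁ d₂ : ℕ} (hd₁ : 3 ≤ d₁) (hd₂ : 3 ≤ d₂)
    (hT : IsBiregularTree T d₁ d₂) (w : V) : 3 ≤ Nat.card (T.neighborSet w) := by
  obtain ⟨-, -, c, -, h1, h2⟩ := hT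
  cases hb : c w
  · rw [h2 w hb]; exact hd₂
  · rw [h1 w hb]; exact hd₁

lemma nbhd_finite {d₁ d₂ : ℕ} (hd₁ : 3 ≤ d₁) (hd₂ : 3 ≤ d₂)
    (hT : IsBiregularTree T d₁ d₂) (w : V) : Finite (T.neighborSet w) := by
  have := three_le_card_nbhd T hd₁ hd₂ hT w
  exact (Nat.card_ne_zero.mp (by omega)).2

lemma three_le_degQ {d₁ d₂ : ℕ} (hd₁ : 3 ≤ d₁) (hd₂ : 3 ≤ d₂)
    (hT : IsBiregularTree T d₁ d₂) (v : VQ Λ) : 3 ≤ degQ T Λ v :=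
  three_le_card_nbhd T hd₁ hd₂ hT _

lemma degQ_mk (haut : ∀ γ ∈ Λ, IsTreeAut T γ) (w : V) :
    degQ T Λ (πV Λ w) = Nat.card (T.neighborSet w) := by
  have hvrel : vrel Λ (Quot.out (πV Λ w)) w := (πV_eq_iff Λ).mp (πV_out Λ (πV Λ w))
  obtain ⟨γ, hγ, hγw⟩ := hvrel
  unfold degQ
  refine Nat.card_congr (Equiv.subtypeEquiv γ (fun c => ?_))
  have := (haut γ hγ).1 (Quot.out (πV Λ w)) c
  rw [hγw] at this
  exact this.symm

lemma one_le_indQ (haut : ∀ γ ∈ Λ, IsTreeAut T γ)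
    (hfin : ∀ v : V, Finite {γ : Λ // (γ : Equiv.Perm V) v = v})
    {d₁ d₂ : ℕ} (hd₁ : 3 ≤ d₁) (hd₂ : 3 ≤ d₂) (hT : IsBiregularTree T d₁ d₂)
    (g : EQ T Λ) : 1 ≤ indQ T Λ g := by
  have hx := πE_out T Λ g
  rw [← hx, indQ_card T Λ haut hfin]
  have hne_fib : Nonempty (Fib T Λ (Quot.out g).1.1 (πE T Λ (Quot.out g))) :=
    ⟨⟨(Quot.out g).1.2, (Quot.out g).2, rfl⟩⟩
  haveI : Finite (T.neighborSet (Quot.out g).1.1) := nbhd_finite T hd₁ hd₂ hT _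
  have hfinf : Finite (Fib T Λ (Quot.out g).1.1 (πE T Λ (Quot.out g))) := by
    refine Finite.of_injective
      (fun c => (⟨c.1, c.2.choose⟩ : T.neighborSet (Quot.out g).1.1)) ?_
    intro a b hab
    have hab' := congrArg Subtype.val hab
    exact Subtype.ext hab'
  exact Nat.card_pos

lemma exists_lift (haut : ∀ γ ∈ Λ, IsTreeAut T γ) (g : EQ T Λ) (w : V)
    (hw : tailQ T Λ g = πV Λ w) :
    ∃ (c : V) (h : T.Adj w c), πE T Λ ⟨(w, c), h⟩ = g := by
  have hvrel : vrel Λ (Quot.out g).1.1 w := (πV_eq_iff Λ).mp hw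
  obtain ⟨γ, hγ, hγw⟩ := hvrel
  have hadj : T.Adj w (γ (Quot.out g).1.2) := by
    have := (haut γ hγ).1 (Quot.out g).1.1 (Quot.out g).1.2
    rw [hγw] at this
    exact this.mpr (Quot.out g).2
  refine ⟨γ (Quot.out g).1.2, hadj, ?_⟩
  refine Eq.trans ((πE_eq_iff T Λ).mpr ⟨γ⁻¹, Λ.inv_mem hγ, ?_, ?_⟩) (πE_out T Λ g)
  · show γ⁻¹ w = (Quot.out g).1.1
    rw [← hγw, Equiv.Perm.inv_apply_self]
  · exact Equiv.Perm.inv_apply_self _ _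

lemma card_split {d₁ d₂ : ℕ} (hd₁ : 3 ≤ d₁) (hd₂ : 3 ≤ d₂)
    (hT : IsBiregularTree T d₁ d₂) (w : V) {x y : EQ T Λ} (hxy : x ≠ y)
    (hcov : ∀ (c : V) (h : T.Adj w c), πE T Λ ⟨(w, c), h⟩ = x ∨ πE T Λ ⟨(w, c), h⟩ = y) :
    Nat.card (T.neighborSet w) = Nat.card (Fib T Λ w x) + Nat.card (Fib T Λ w y) := by
  classical
  haveI : Finite (T.neighborSet w) := nbhd_finite T hd₁ hd₂ hT w
  set P : T.neighborSet w → Prop := fun c => πE T Λ ⟨(w, c.1), c.2⟩ = x with hP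
  have e1 : T.neighborSet w ≃ {c : T.neighborSet w // P c} ⊕ {c : T.neighborSet w // ¬ P c} :=
    (Equiv.sumCompl P).symm
  have e2 : {c : T.neighborSet w // P c} ≃ Fib T Λ w x :=
    { toFun := fun c => ⟨c.1.1, c.1.2, c.2⟩
      invFun := fun d => ⟨⟨d.1, d.2.choose⟩, d.2.choose_spec⟩
      left_inv := fun c => Subtype.ext (Subtype.ext rfl)
      right_inv := fun d => Subtype.ext rfl }
  have e3 : {c : T.neighborSet w // ¬ P c} ≃ Fib T Λ w y :=
    { toFun := fun c => ⟨c.1.1, c.1.2, (hcov c.1.1 c.1.2).resolve_left c.2⟩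
      invFun := fun d => ⟨⟨d.1, d.2.choose⟩, fun hPc => hxy (hPc.symm.trans d.2.choose_spec)⟩
      left_inv := fun c => Subtype.ext (Subtype.ext rfl)
      right_inv := fun d => Subtype.ext rfl }
  rw [Nat.card_congr e1, Nat.card_sum, Nat.card_congr e2, Nat.card_congr e3]

lemma card_single (w : V) {x : EQ T Λ}
    (hcov : ∀ (c : V) (h : T.Adj w c), πE T Λ ⟨(w, c), h⟩ = x) :
    Nat.card (T.neighborSet w) = Nat.card (Fib T Λ w x) :=
  Nat.card_congr (Equiv.subtypeEquivRight (fun c =>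
    ⟨fun h => ⟨h, hcov c h⟩, fun h => h.choose⟩))

end Aux
/-! #### The step relation of the Markov chain -/

/-- One step of the Markov chain with positive probability. -/
def StepRel (g g' : EQ T Λ) : Prop := 0 < kerP T Λ g g'

section Main

variable {d₁ d₂ : ℕ} (hd₁ : 3 ≤ d₁) (hd₂ : 3 ≤ d₂) (hT : IsBiregularTree T d₁ d₂)
  (haut : ∀ γ ∈ Λ, IsTreeAut T γ)
  (hfin : ∀ v : V, Finite {γ : Λ // (γ : Equiv.Perm V) v = v})

include hd₁ hd₂ hT

lemma deg_denom_pos (v : VQ Λ) : (0:ℝ) < (degQ T Λ v : ℝ) - 1 := by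
  have h := three_le_degQ T Λ hd₁ hd₂ hT v
  have h3 : (3:ℝ) ≤ (degQ T Λ v : ℝ) := by exact_mod_cast h
  linarith

include haut hfin

lemma one_le_ind_real (g : EQ T Λ) : (1:ℝ) ≤ (indQ T Λ g : ℝ) := by
  exact_mod_cast one_le_indQ T Λ haut hfin hd₁ hd₂ hT g

lemma kerP_nonneg (g g' : EQ T Λ) : 0 ≤ kerP T Λ g g' := by
  unfold kerP
  split_ifs with h1 h2
  · apply div_nonneg
    · have := one_le_ind_real T Λ hd₁ hd₂ hT haut hfin g'
      linarith
    · have := deg_denom_pos T Λ hd₁ hd₂ hT (headQ T Λ g)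
      linarith
  · apply div_nonneg
    · positivity
    · have := deg_denom_pos T Λ hd₁ hd₂ hT (headQ T Λ g)
      linarith
  · exact le_refl 0

lemma kerP_pos_of_ne {g g' : EQ T Λ} (h1 : headQ T Λ g = tailQ T Λ g')
    (h2 : g' ≠ barQ T Λ g) : StepRel T Λ g g' := by
  unfold StepRel kerP
  rw [if_pos h1, if_neg h2]
  apply div_pos
  · have := one_le_ind_real T Λ hd₁ hd₂ hT haut hfin g'
    linarith
  · exact deg_denom_pos T Λ hd₁ hd₂ hT (headQ T Λ g)

lemma kerP_pos_rev {g : EQ T Λ} (h2 : 2 ≤ indQ T Λ (barQ T Λ g)) :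
    StepRel T Λ g (barQ T Λ g) := by
  unfold StepRel kerP
  rw [if_pos (tailQ_barQ T Λ g).symm, if_pos rfl]
  apply div_pos
  · have h2' : (2:ℝ) ≤ (indQ T Λ (barQ T Λ g) : ℝ) := by exact_mod_cast h2
    linarith
  · exact deg_denom_pos T Λ hd₁ hd₂ hT (headQ T Λ g)

omit hd₁ hd₂ hT haut hfin in
lemma head_eq_of_step {g g' : EQ T Λ} (h : StepRel T Λ g g') :
    headQ T Λ g = tailQ T Λ g' := by
  by_contra hc
  unfold StepRel kerP at h
  rw [if_neg hc] at h
  exact lt_irrefl 0 h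

lemma two_le_of_step_rev {g : EQ T Λ} (h : StepRel T Λ g (barQ T Λ g)) :
    2 ≤ indQ T Λ (barQ T Λ g) := by
  by_contra hc
  have h1 : indQ T Λ (barQ T Λ g) = 1 :=
    le_antisymm (by omega) (one_le_indQ T Λ haut hfin hd₁ hd₂ hT _)
  unfold StepRel kerP at h
  rw [if_pos (tailQ_barQ T Λ g).symm, if_pos rfl, h1] at h
  norm_num at h

lemma step_rev {g g' : EQ T Λ} (h : StepRel T Λ g g') :
    StepRel T Λ (barQ T Λ g') (barQ T Λ g) := by
  by_cases hc : g' = barQ T Λ g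
  · subst hc
    rw [barQ_barQ]
    exact h
  · apply kerP_pos_of_ne T Λ hd₁ hd₂ hT haut hfin
    · rw [headQ_barQ, tailQ_barQ]
      exact (head_eq_of_step T Λ h).symm
    · rw [barQ_barQ]
      exact fun hx => hc hx.symm

lemma rtg_rev {e g : EQ T Λ} (h : Relation.ReflTransGen (StepRel T Λ) e g) :
    Relation.ReflTransGen (StepRel T Λ) (barQ T Λ g) (barQ T Λ e) := by
  induction h with
  | refl => exact Relation.ReflTransGen.refl
  | tail hab hbc ih =>
    exact Relation.ReflTransGen.head (step_rev T Λ hd₁ hd₂ hT haut hfin hbc) ih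

lemma exists_step (g : EQ T Λ) : ∃ g', StepRel T Λ g g' := by
  classical
  set x := Quot.out g with hx
  have hg : πE T Λ x = g := πE_out T Λ g
  have hbar : barQ T Λ g = πE T Λ ⟨(x.1.2, x.1.1), x.2.symm⟩ := by
    rw [← hg, barQ_mk]
  by_cases hall : ∀ (c : V) (h : T.Adj x.1.2 c), πE T Λ ⟨(x.1.2, c), h⟩ = barQ T Λ g
  · refine ⟨barQ T Λ g, kerP_pos_rev T Λ hd₁ hd₂ hT haut hfin ?_⟩
    have h1 : Nat.card (T.neighborSet x.1.2) = Nat.card (Fib T Λ x.1.2 (barQ T Λ g)) :=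
      card_single T Λ _ hall
    have h2 : indQ T Λ (barQ T Λ g) = Nat.card (Fib T Λ x.1.2 (barQ T Λ g)) := by
      rw [hbar]
      exact indQ_card T Λ haut hfin ⟨(x.1.2, x.1.1), x.2.symm⟩
    have h3 := three_le_card_nbhd T hd₁ hd₂ hT x.1.2
    omega
  · push_neg at hall
    obtain ⟨c, h, hne⟩ := hall
    refine ⟨πE T Λ ⟨(x.1.2, c), h⟩, kerP_pos_of_ne T Λ hd₁ hd₂ hT haut hfin ?_ hne⟩
    rw [tailQ_mk T Λ ⟨_, _⟩]
    rfl

omit hfin in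
lemma finite_tail (v : VQ Λ) : {g : EQ T Λ | tailQ T Λ g = v}.Finite := by
  haveI : Finite (T.neighborSet (Quot.out v)) := nbhd_finite T hd₁ hd₂ hT _
  rw [← Set.finite_coe_iff]
  refine Finite.of_surjective
    (fun c : T.neighborSet (Quot.out v) =>
      (⟨πE T Λ ⟨(Quot.out v, c.1), c.2⟩, by
        exact (tailQ_mk T Λ _).trans (πV_out Λ v)⟩ :
        {g : EQ T Λ | tailQ T Λ g = v})) ?_
  rintro ⟨g, hg⟩
  obtain ⟨c, h, heq⟩ := exists_lift T Λ haut g (Quot.out v)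
    (by rw [Set.mem_setOf_eq] at hg; rw [hg, πV_out])
  exact ⟨⟨c, h⟩, Subtype.ext heq⟩

/-! #### Positivity of the iterated kernel along steps -/

omit hd₁ hd₂ hT haut hfin in
lemma kerPn_succ (n : ℕ) (e f : EQ T Λ) :
    kerPn T Λ (n+1) e f = ∑' g : EQ T Λ, kerPn T Λ n e g * kerP T Λ g f := rfl

lemma kerPn_nonneg (n : ℕ) : ∀ e f : EQ T Λ, 0 ≤ kerPn T Λ n e f := by
  induction n with
  | zero =>
    intro e f
    unfold kerPn
    split_ifs <;> norm_num
  | succ n ih =>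
    intro e f
    rw [kerPn_succ]
    exact tsum_nonneg fun g =>
      mul_nonneg (ih e g) (kerP_nonneg T Λ hd₁ hd₂ hT haut hfin g f)

lemma kerPn_supp_finite (n : ℕ) (e : EQ T Λ) :
    {f : EQ T Λ | kerPn T Λ n e f ≠ 0}.Finite := by
  induction n with
  | zero =>
    apply Set.Finite.subset (Set.finite_singleton e)
    intro f hf
    simp only [Set.mem_setOf_eq] at hf
    simp only [Set.mem_singleton_iff]
    by_contra hne
    apply hf
    unfold kerPn
    rw [if_neg (fun hh => hne hh.symm)]
  | succ n ih =>
    refine Set.Finite.subset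
      (ih.biUnion (fun g _ => finite_tail T Λ hd₁ hd₂ hT haut (headQ T Λ g))) ?_
    intro f hf
    simp only [Set.mem_setOf_eq] at hf
    have hex : ∃ g, kerPn T Λ n e g * kerP T Λ g f ≠ 0 := by
      by_contra hc
      push_neg at hc
      apply hf
      rw [kerPn_succ]
      exact (tsum_congr fun g => hc g).trans tsum_zero
    obtain ⟨g, hg⟩ := hex
    have h1 : kerPn T Λ n e g ≠ 0 := left_ne_zero_of_mul hg
    have h2 : kerP T Λ g f ≠ 0 := right_ne_zero_of_mul hg
    have h3 : headQ T Λ g = tailQ T Λ f :=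
      head_eq_of_step T Λ
        (lt_of_le_of_ne (kerP_nonneg T Λ hd₁ hd₂ hT haut hfin g f) (Ne.symm h2))
    exact Set.mem_biUnion h1 h3.symm

lemma kerPn_step_pos {n : ℕ} {e g f : EQ T Λ} (hg : 0 < kerPn T Λ n e g)
    (hf : StepRel T Λ g f) : 0 < kerPn T Λ (n+1) e f := by
  have hsum : Summable (fun g' => kerPn T Λ n e g' * kerP T Λ g' f) := by
    apply summable_of_ne_finset_zero
      (s := (kerPn_supp_finite T Λ hd₁ hd₂ hT haut hfin n e).toFinset)
    intro b hb
    rw [Set.Finite.mem_toFinset] at hb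
    simp only [Set.mem_setOf_eq, not_not] at hb
    rw [hb, zero_mul]
  rw [kerPn_succ]
  calc (0:ℝ) < kerPn T Λ n e g * kerP T Λ g f := mul_pos hg hf
  _ ≤ ∑' g', kerPn T Λ n e g' * kerP T Λ g' f :=
      Summable.le_tsum hsum g (fun j _ =>
        mul_nonneg (kerPn_nonneg T Λ hd₁ hd₂ hT haut hfin n e j)
          (kerP_nonneg T Λ hd₁ hd₂ hT haut hfin j f))

lemma reach_kerPn {e f : EQ T Λ} (h : Relation.TransGen (StepRel T Λ) e f) :
    ∃ n : ℕ, 1 ≤ n ∧ 0 < kerPn T Λ n e f := by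
  induction h with
  | single hstep =>
    refine ⟨1, le_refl 1, kerPn_step_pos T Λ hd₁ hd₂ hT haut hfin (n := 0) (g := e) ?_ hstep⟩
    unfold kerPn
    rw [if_pos rfl]
    norm_num
  | tail hab hbc ih =>
    obtain ⟨n, h1, h2⟩ := ih
    exact ⟨n+1, by omega, kerPn_step_pos T Λ hd₁ hd₂ hT haut hfin h2 hbc⟩

end Main
section MainB

variable {d₁ d₂ : ℕ} (hd₁ : 3 ≤ d₁) (hd₂ : 3 ≤ d₂) (hT : IsBiregularTree T d₁ d₂)
  (haut : ∀ γ ∈ Λ, IsTreeAut T γ)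
  (hfin : ∀ v : V, Finite {γ : Λ // (γ : Equiv.Perm V) v = v})
  (N : VQ Λ → ℝ) (hNpos : ∀ v, 0 < N v)
  (hNrel : ∀ g : EQ T Λ, N (headQ T Λ g) = deltaQ T Λ g * N (tailQ T Λ g))
  (hNsum : Summable (fun v : VQ Λ => (N v)⁻¹))

include hd₁ hd₂ hT haut hfin hNpos hNrel hNsum

/-- **Key reversal lemma**: from any quotient edge the Markov chain can reach its
reversal. -/
lemma reach_bar (e : EQ T Λ) :
    Relation.TransGen (StepRel T Λ) e (barQ T Λ e) := by
  classical
  by_cases hA : ∃ h, Relation.ReflTransGen (StepRel T Λ) e h ∧ 2 ≤ indQ T Λ (barQ T Λ h)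
  · obtain ⟨h, hreach, hind⟩ := hA
    exact Relation.TransGen.trans_left
      (Relation.TransGen.tail' hreach (kerP_pos_rev T Λ hd₁ hd₂ hT haut hfin hind))
      (rtg_rev T Λ hd₁ hd₂ hT haut hfin hreach)
  · push_neg at hA
    have hB : ∀ h', Relation.ReflTransGen (StepRel T Λ) e h' → indQ T Λ (barQ T Λ h') = 1 := by
      intro h' hr
      have h2 := hA h' hr
      have h1 := one_le_indQ T Λ haut hfin hd₁ hd₂ hT (barQ T Λ h')
      omega
    by_cases hI : ∃ g₁ g₂, Relation.ReflTransGen (StepRel T Λ) e g₁ ∧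
        Relation.ReflTransGen (StepRel T Λ) e g₂ ∧ g₁ ≠ g₂ ∧ headQ T Λ g₁ = headQ T Λ g₂
    · obtain ⟨g₁, g₂, hr₁, hr₂, hne, hhd⟩ := hI
      have hstep : StepRel T Λ g₁ (barQ T Λ g₂) := by
        apply kerP_pos_of_ne T Λ hd₁ hd₂ hT haut hfin
        · rw [tailQ_barQ]
          exact hhd
        · intro hc
          exact hne (barQ_inj T Λ hc).symm
      exact Relation.TransGen.trans_left
        (Relation.TransGen.tail' hr₁ hstep)
        (rtg_rev T Λ hd₁ hd₂ hT haut hfin hr₂)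
    · exfalso
      push_neg at hI
      have hInj : ∀ g₁ g₂, Relation.ReflTransGen (StepRel T Λ) e g₁ →
          Relation.ReflTransGen (StepRel T Λ) e g₂ → headQ T Λ g₁ = headQ T Λ g₂ → g₁ = g₂ := by
        intro g₁ g₂ h1 h2 hh
        by_contra hne
        exact hI g₁ g₂ h1 h2 hne hh
      -- N is nonincreasing along reachable steps
      have hNstep : ∀ g, Relation.ReflTransGen (StepRel T Λ) e g →
          N (headQ T Λ g) ≤ N (tailQ T Λ g) := by
        intro g hg
        have hbar := hB g hg
        rw [hNrel g]
        unfold deltaQ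
        rw [hbar]
        have hind := one_le_ind_real T Λ hd₁ hd₂ hT haut hfin g
        have hp := hNpos (tailQ T Λ g)
        rw [Nat.cast_one, div_mul_eq_mul_div, one_mul]
        exact div_le_self hp.le hind
      have hNle : ∀ g, Relation.ReflTransGen (StepRel T Λ) e g →
          N (headQ T Λ g) ≤ N (headQ T Λ e) := by
        intro g hg
        induction hg with
        | refl => exact le_refl _
        | @tail b c hab hbc ih =>
          have hc : Relation.ReflTransGen (StepRel T Λ) e c := hab.tail hbc
          have h1 := hNstep c hc
          rw [← head_eq_of_step T Λ hbc] at h1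
          exact h1.trans ih
      -- the set of reachable edges is finite
      have hVfin : {v : VQ Λ | N v ≤ N (headQ T Λ e)}.Finite := by
        have hε : (0:ℝ) < (N (headQ T Λ e))⁻¹ := inv_pos.mpr (hNpos _)
        have hev : ∀ᶠ v in Filter.cofinite, (N v)⁻¹ < (N (headQ T Λ e))⁻¹ :=
          hNsum.tendsto_cofinite_zero.eventually (gt_mem_nhds hε)
        rw [Filter.eventually_cofinite] at hev
        refine hev.subset ?_
        intro v hv
        simp only [Set.mem_setOf_eq, not_lt] at hv ⊢
        exact inv_anti₀ (hNpos v) hv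
      have hRfin : {g : EQ T Λ | Relation.ReflTransGen (StepRel T Λ) e g}.Finite := by
        apply Set.Finite.of_finite_image (f := headQ T Λ)
        · apply hVfin.subset
          rintro v ⟨g, hg, rfl⟩
          exact hNle g hg
        · intro a ha b hb hab
          exact hInj a b ha hb hab
      -- the canonical successor function
      obtain ⟨F, hF⟩ := Classical.axiomOfChoice
        (fun g : EQ T Λ => exists_step T Λ hd₁ hd₂ hT haut hfin g)
      have hmem : ∀ n : ℕ, Relation.ReflTransGen (StepRel T Λ) e (F^[n] e) := by
        intro n
        induction n with
        | zero => exact Relation.ReflTransGen.refl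
        | succ n ih =>
          rw [Function.iterate_succ_apply']
          exact ih.tail (hF _)
      haveI hRsub : Finite {g : EQ T Λ // Relation.ReflTransGen (StepRel T Λ) e g} :=
        hRfin.to_subtype
      obtain ⟨i, j, hij, hfij⟩ := Finite.exists_ne_map_eq_of_infinite
        (fun n : ℕ => (⟨F^[n] e, hmem n⟩ :
          {g : EQ T Λ // Relation.ReflTransGen (StepRel T Λ) e g}))
      have hfij' : F^[i] e = F^[j] e := congrArg Subtype.val hfij
      have hpeel : ∀ m n : ℕ, F^[m] e = F^[m + n] e → e = F^[n] e := by
        intro m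
        induction m with
        | zero => intro n h; simpa using h
        | succ m ih =>
          intro n h
          rw [Nat.succ_add, Function.iterate_succ_apply', Function.iterate_succ_apply'] at h
          have hx : headQ T Λ (F^[m] e) = headQ T Λ (F^[m+n] e) := by
            rw [head_eq_of_step T Λ (hF (F^[m] e)), head_eq_of_step T Λ (hF (F^[m+n] e)), h]
          exact ih n (hInj _ _ (hmem m) (hmem (m+n)) hx)
      have hper : ∃ p : ℕ, 1 ≤ p ∧ e = F^[p] e := by
        rcases hij.lt_or_gt with h | h
        · refine ⟨j - i, by omega, hpeel i (j - i) ?_⟩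
          rw [show i + (j - i) = j by omega]
          exact hfij'
        · refine ⟨i - j, by omega, hpeel j (i - j) ?_⟩
          rw [show j + (i - j) = i by omega]
          exact hfij'.symm
      obtain ⟨p, hp1, hperiod⟩ := hper
      set u : ℕ → EQ T Λ := fun k => F^[k] e with hu
      have hsucc_u : ∀ k, u (k+1) = F (u k) := fun k => Function.iterate_succ_apply' F k e
      have hstepk : ∀ k, StepRel T Λ (u k) (u (k+1)) := by
        intro k
        rw [hsucc_u k]
        exact hF (u k)
      have humem : ∀ k, Relation.ReflTransGen (StepRel T Λ) e (u k) := fun k => hmem k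
      have hnonrev : ∀ k, u (k+1) ≠ barQ T Λ (u k) := by
        intro k hk
        have hs := hstepk k
        rw [hk] at hs
        have h2 := two_le_of_step_rev T Λ hd₁ hd₂ hT haut hfin hs
        have h1 := hB (u k) (humem k)
        omega
      have hindrel : ∀ k, N (headQ T Λ (u (k+1))) =
          N (headQ T Λ (u k)) / (indQ T Λ (u (k+1)) : ℝ) := by
        intro k
        have hrel := hNrel (u (k+1))
        have hbar := hB (u (k+1)) (humem (k+1))
        have htl : tailQ T Λ (u (k+1)) = headQ T Λ (u k) :=
          (head_eq_of_step T Λ (hstepk k)).symm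
        rw [hrel]
        unfold deltaQ
        rw [hbar, htl, Nat.cast_one, div_mul_eq_mul_div, one_mul]
      have hAnti : Antitone (fun k => N (headQ T Λ (u k))) := by
        apply antitone_nat_of_succ_le
        intro k
        rw [hindrel k]
        exact div_le_self (hNpos _).le (one_le_ind_real T Λ hd₁ hd₂ hT haut hfin _)
      have hA10 : N (headQ T Λ (u 1)) = N (headQ T Λ (u 0)) := by
        have h1 : N (headQ T Λ (u p)) = N (headQ T Λ (u 0)) := by
          have : u p = u 0 := hperiod.symm
          rw [this]
        have h2 := hAnti hp1
        have h3 := hAnti (Nat.zero_le 1)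
        simp only at h2 h3
        linarith
      have hind1 : indQ T Λ (u 1) = 1 := by
        have hrel := hindrel 0
        rw [hA10] at hrel
        have hp0 := hNpos (headQ T Λ (u 0))
        have hind := one_le_ind_real T Λ hd₁ hd₂ hT haut hfin (u 1)
        have hne0 : (indQ T Λ (u 1) : ℝ) ≠ 0 := by linarith
        rw [eq_div_iff hne0] at hrel
        have hr : (indQ T Λ (u 1) : ℝ) = 1 :=
          mul_left_cancel₀ (ne_of_gt hp0) (by rw [mul_one]; exact hrel)
        exact_mod_cast hr
      -- unique successor at e
      have hsurj : ∀ g, Relation.ReflTransGen (StepRel T Λ) e g →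
          ∃ t, Relation.ReflTransGen (StepRel T Λ) e t ∧ F t = g := by
        set Fr : {g : EQ T Λ // Relation.ReflTransGen (StepRel T Λ) e g} →
            {g : EQ T Λ // Relation.ReflTransGen (StepRel T Λ) e g} :=
          fun g => ⟨F g.1, g.2.tail (hF g.1)⟩ with hFr
        have hFrinj : Function.Injective Fr := by
          intro a b hab
          have hab' : F a.1 = F b.1 := congrArg Subtype.val hab
          have hx : headQ T Λ a.1 = headQ T Λ b.1 := by
            rw [head_eq_of_step T Λ (hF a.1), head_eq_of_step T Λ (hF b.1), hab']
          exact Subtype.ext (hInj a.1 b.1 a.2 b.2 hx)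
        have hFrsurj := (Finite.injective_iff_bijective.mp hFrinj).2
        intro g hg
        obtain ⟨t, ht⟩ := hFrsurj ⟨g, hg⟩
        exact ⟨t.1, t.2, congrArg Subtype.val ht⟩
      have hsucc : ∀ x, StepRel T Λ e x → x = u 1 := by
        intro x hx
        have hxR : Relation.ReflTransGen (StepRel T Λ) e x :=
          Relation.ReflTransGen.single hx
        obtain ⟨t, htR, htF⟩ := hsurj x hxR
        have hxt : headQ T Λ t = headQ T Λ e := by
          rw [head_eq_of_step T Λ (hF t), htF, ← head_eq_of_step T Λ hx]
        have ht_eq : t = e := hInj t e htR Relation.ReflTransGen.refl hxt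
        rw [← htF, ht_eq]
        rfl
      -- classification of the outgoing edges at head e
      set x0 := Quot.out e with hx0
      have hbar0 : barQ T Λ e = πE T Λ ⟨(x0.1.2, x0.1.1), x0.2.symm⟩ := by
        conv_lhs => rw [← πE_out T Λ e]
        rw [barQ_mk]
      have hcov : ∀ (c : V) (h : T.Adj x0.1.2 c),
          πE T Λ ⟨(x0.1.2, c), h⟩ = u 1 ∨ πE T Λ ⟨(x0.1.2, c), h⟩ = barQ T Λ e := by
        intro c h
        by_cases hc : πE T Λ ⟨(x0.1.2, c), h⟩ = barQ T Λ e
        · right; exact hc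
        · left
          apply hsucc
          apply kerP_pos_of_ne T Λ hd₁ hd₂ hT haut hfin
          · rw [tailQ_mk T Λ ⟨_, _⟩]
            rfl
          · exact hc
      have hne1 : u 1 ≠ barQ T Λ e := hnonrev 0
      have hsplit := card_split T Λ hd₁ hd₂ hT x0.1.2 hne1 hcov
      obtain ⟨c₁, h₁, hrep₁⟩ := exists_lift T Λ haut (u 1) x0.1.2
        (head_eq_of_step T Λ (hstepk 0)).symm
      have hc₁ : Nat.card (Fib T Λ x0.1.2 (u 1)) = indQ T Λ (u 1) := by
        rw [← hrep₁]
        exact (indQ_card T Λ haut hfin ⟨(x0.1.2, c₁), h₁⟩).symm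
      have hcbar : Nat.card (Fib T Λ x0.1.2 (barQ T Λ e)) = indQ T Λ (barQ T Λ e) := by
        rw [hbar0]
        exact (indQ_card T Λ haut hfin ⟨(x0.1.2, x0.1.1), x0.2.symm⟩).symm
      have hbind : indQ T Λ (barQ T Λ e) = 1 := hB e Relation.ReflTransGen.refl
      have h3 := three_le_card_nbhd T hd₁ hd₂ hT x0.1.2
      rw [hc₁, hcbar, hind1, hbind] at hsplit
      omega

lemma step_or_rev {g g' : EQ T Λ} (h : headQ T Λ g = tailQ T Λ g') :
    Relation.TransGen (StepRel T Λ) g g' := by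
  by_cases hc : g' = barQ T Λ g
  · rw [hc]
    exact reach_bar T Λ hd₁ hd₂ hT haut hfin N hNpos hNrel hNsum g
  · exact Relation.TransGen.single (kerP_pos_of_ne T Λ hd₁ hd₂ hT haut hfin h hc)

lemma walk_reach (f : EQ T Λ) :
    ∀ (b cend : V) (p : T.Walk b cend), tailQ T Λ f = πV Λ cend →
      ∀ g : EQ T Λ, headQ T Λ g = πV Λ b →
      Relation.TransGen (StepRel T Λ) g f := by
  intro b cend p
  induction p with
  | nil =>
    intro hf g hg
    exact step_or_rev T Λ hd₁ hd₂ hT haut hfin N hNpos hNrel hNsum (hg.trans hf.symm)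
  | @cons b' v' w' hadj q ih =>
    intro hf g hg
    refine Relation.TransGen.trans
      (step_or_rev T Λ hd₁ hd₂ hT haut hfin N hNpos hNrel hNsum
        (g' := πE T Λ ⟨(b', v'), hadj⟩) ?_)
      (ih hf (πE T Λ ⟨(b', v'), hadj⟩) ?_)
    · rw [tailQ_mk T Λ ⟨_, _⟩]
      exact hg
    · rw [headQ_mk T Λ ⟨_, _⟩]

end MainB

/-- Lemma 3.1. The Markov chain associated to a tree lattice is
irreducible. -/
theorem markov_chain_irreducible {V : Type*} (T : SimpleGraph V) (d₁ d₂ : ℕ)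
    (hd₁ : 3 ≤ d₁) (hd₂ : 3 ≤ d₂) (hT : IsBiregularTree T d₁ d₂)
    (Λ : Subgroup (Equiv.Perm V)) (hΛ : IsTreeLattice T Λ) :
    ∀ e f : EQ T Λ, ∃ n : ℕ, 1 ≤ n ∧ 0 < kerPn T Λ n e f := by
  intro e f
  obtain ⟨haut, hfin, o, N, hN1, hNpos, hNrel, hNsum⟩ := hΛ
  obtain ⟨p⟩ : Nonempty (T.Walk (Quot.out e).1.2 (Quot.out f).1.1) :=
    hT.1.preconnected _ _
  exact reach_kerPn T Λ hd₁ hd₂ hT haut hfin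
    (walk_reach T Λ hd₁ hd₂ hT haut hfin N hNpos hNrel hNsum f _ _ p rfl e rfl)


end TreeDyn
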